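/- Barrier bound for the singular component: let m = √γ and suppose z satisfies L_ε z = ε z_xx + a z_x − b z_t − c z with a ≥ 0, b ≥ β > 0, c ≥ γ > 0 on Q = (0,1)×(0,τ], with z = 0 on the bottom and right boundaries and |z(0,t)| ≤ C₀. Then the function ψ^±(x,t) = C exp(−m x/√ε) e^t ± z(x,t), for C ≥ C₀ sufficiently large, satisfies L_ε ψ^± ≤ 0 in Q; consequently |z(x,t)| ≤ C exp(−m x/√ε) on Q̄ for some constant C independent of ε. -/

import Mathlib

set_option maxHeartbeats 1000000
open Set Filter Topology

lemma deriv2_test_min (lo hi x₀ : ℝ) (f f' : ℝ → ℝ) (f'' : ℝ)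
    (hx : x₀ ∈ Set.Ioo lo hi)
    (hf : ∀ x ∈ Set.Icc lo hi, HasDerivAt f (f' x) x)
    (hf'' : HasDerivAt f' f'' x₀)
    (hmin : ∀ x ∈ Set.Icc lo hi, f x₀ ≤ f x) :
    f' x₀ = 0 ∧ 0 ≤ f'' := by
  have hxm : x₀ ∈ Set.Icc lo hi := ⟨hx.1.le, hx.2.le⟩
  have hloc : IsLocalMin f x₀ :=
    Filter.eventually_of_mem (Icc_mem_nhds hx.1 hx.2) hmin
  have h1 : f' x₀ = 0 := hloc.hasDerivAt_eq_zero (hf x₀ hxm)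
  refine ⟨h1, ?_⟩
  by_contra hneg
  push_neg at hneg
  have hslope : Tendsto (slope f' x₀) (𝓝[>] x₀) (𝓝 f'') :=
    (hasDerivAt_iff_tendsto_slope.mp hf'').mono_left
      (nhdsWithin_mono _ (fun y hy => ne_of_gt hy))
  have hev : {x | slope f' x₀ x < 0} ∈ 𝓝[>] x₀ := hslope (gt_mem_nhds hneg)
  obtain ⟨u, hu, hsub⟩ := mem_nhdsGT_iff_exists_Ioo_subset.mp hev
  set x₁ := min ((x₀ + u) / 2) ((x₀ + hi) / 2) with hx₁
  have hu' : x₀ < u := hu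
  have hx01 : x₀ < x₁ := lt_min (by linarith) (by linarith [hx.2])
  have hx1u : x₁ < u := lt_of_le_of_lt (min_le_left _ _) (by linarith)
  have hx1hi : x₁ < hi := lt_of_le_of_lt (min_le_right _ _) (by linarith [hx.2])
  have hIccsub : Set.Icc x₀ x₁ ⊆ Set.Icc lo hi :=
    fun y hy => ⟨le_trans hx.1.le hy.1, le_trans hy.2 hx1hi.le⟩
  have hfneg : ∀ y ∈ Set.Ioo x₀ x₁, f' y < 0 := by
    intro y hy
    have hs : slope f' x₀ y < 0 := hsub ⟨hy.1, lt_trans hy.2 hx1u⟩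
    have hy0 : 0 < y - x₀ := sub_pos.2 hy.1
    have : f' y / (y - x₀) < 0 := by
      rw [slope_def_field, h1, sub_zero] at hs
      exact hs
    nlinarith [mul_neg_of_neg_of_pos this hy0, (div_mul_cancel₀ (f' y) hy0.ne')]
  have hanti : StrictAntiOn f (Set.Icc x₀ x₁) := by
    apply strictAntiOn_of_deriv_neg (convex_Icc _ _)
    · exact fun y hy => ((hf y (hIccsub hy)).continuousAt).continuousWithinAt
    · intro y hy
      rw [interior_Icc] at hy
      rw [(hf y (hIccsub (Set.mem_Icc_of_Ioo hy))).deriv]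
      exact hfneg y hy
  have : f x₁ < f x₀ := hanti ⟨le_refl _, hx01.le⟩ ⟨hx01.le, le_refl _⟩ hx01
  exact absurd (hmin x₁ (hIccsub ⟨hx01.le, le_refl _⟩)) (by linarith)

lemma aux_min_principle (ε τ β γ m C₀ : ℝ)
    (hε : 0 < ε) (hτ : 0 < τ) (hβ : 0 < β) (hγ : 0 < γ)
    (hm : m = Real.sqrt γ) (hC₀ : 0 ≤ C₀)
    (a b c z zx zxx zt : ℝ → ℝ → ℝ)
    (ha : ∀ x t, 0 ≤ a x t) (hb : ∀ x t, β ≤ b x t) (hc : ∀ x t, γ ≤ c x t)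
    (hz : ContinuousOn (fun p : ℝ × ℝ => z p.1 p.2)
      (Set.Icc 0 1 ×ˢ Set.Icc 0 τ))
    (hzx : ∀ x ∈ Set.Icc (0:ℝ) 1, ∀ t ∈ Set.Icc (0:ℝ) τ,
      HasDerivAt (fun y => z y t) (zx x t) x)
    (hzxx : ∀ x ∈ Set.Icc (0:ℝ) 1, ∀ t ∈ Set.Icc (0:ℝ) τ,
      HasDerivAt (fun y => zx y t) (zxx x t) x)
    (hzt : ∀ x ∈ Set.Icc (0:ℝ) 1, ∀ t ∈ Set.Icc (0:ℝ) τ,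
      HasDerivAt (fun s => z x s) (zt x t) t)
    (heq : ∀ x ∈ Set.Ioo (0:ℝ) 1, ∀ t ∈ Set.Ioc (0:ℝ) τ,
      ε * zxx x t + a x t * zx x t - b x t * zt x t - c x t * z x t = 0)
    (hbottom : ∀ x ∈ Set.Icc (0:ℝ) 1, z x 0 = 0)
    (hrightbd : ∀ t ∈ Set.Icc (0:ℝ) τ, z 1 t = 0)
    (hleftbd : ∀ t ∈ Set.Icc (0:ℝ) τ, z 0 t ≤ C₀) :
    ∀ x ∈ Set.Icc (0:ℝ) 1, ∀ t ∈ Set.Icc (0:ℝ) τ,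
      z x t ≤ C₀ * Real.exp (-(m * x) / Real.sqrt ε) * Real.exp t := by
  have hsε : 0 < Real.sqrt ε := Real.sqrt_pos.2 hε
  set q : ℝ := m / Real.sqrt ε with hqdef
  have hm0 : 0 ≤ m := hm ▸ Real.sqrt_nonneg γ
  have hq0 : 0 ≤ q := div_nonneg hm0 hsε.le
  have hm2 : m ^ 2 = γ := by rw [hm]; exact Real.sq_sqrt hγ.le
  have hq2 : ε * (q * q) = γ := by
    have h1 : Real.sqrt ε * Real.sqrt ε = ε := Real.mul_self_sqrt hε.le
    field_simp [hqdef]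
    rw [hqdef, div_pow, Real.sq_sqrt hε.le, hm2, mul_div_cancel₀ _ hε.ne']
  set E : ℝ → ℝ := fun x => Real.exp (-q * x) with hEdef
  have hEarg : ∀ x : ℝ, -(m * x) / Real.sqrt ε = -q * x := by
    intro x; rw [hqdef, neg_mul, neg_div, mul_div_right_comm]
  have hE0 : ∀ x, 0 < E x := fun x => Real.exp_pos _
  have hEderiv : ∀ x : ℝ, HasDerivAt E (E x * -q) x := by
    intro x
    simpa [hEdef, mul_comm] using ((hasDerivAt_id x).const_mul (-q)).exp
  -- the barrier minus z
  set ψ : ℝ × ℝ → ℝ := fun p => C₀ * E p.1 * Real.exp p.2 - z p.1 p.2 with hψdef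
  set K : Set (ℝ × ℝ) := Set.Icc 0 1 ×ˢ Set.Icc 0 τ with hKdef
  have hKc : IsCompact K := (isCompact_Icc).prod (isCompact_Icc)
  have hKne : K.Nonempty := ⟨(0, 0), ⟨⟨le_refl _, zero_le_one⟩, ⟨le_refl _, hτ.le⟩⟩⟩
  have hψcont : ContinuousOn ψ K := by
    apply ContinuousOn.sub _ hz
    apply Continuous.continuousOn
    fun_prop
  obtain ⟨p₀, hp₀K, hp₀min⟩ := hKc.exists_isMinOn hKne hψcont
  have hmin : ∀ p ∈ K, ψ p₀ ≤ ψ p := hp₀min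
  suffices h : 0 ≤ ψ p₀ by
    intro x hx t ht
    have := le_trans h (hmin (x, t) ⟨hx, ht⟩)
    rw [hEarg x]
    simpa [hψdef, hEdef, sub_nonneg] using this
  by_contra hneg
  push_neg at hneg
  have hx₀ : p₀.1 ∈ Set.Icc (0:ℝ) 1 := hp₀K.1
  have ht₀ : p₀.2 ∈ Set.Icc (0:ℝ) τ := hp₀K.2
  set x₀ := p₀.1
  set t₀ := p₀.2
  have hψp : ψ p₀ = C₀ * E x₀ * Real.exp t₀ - z x₀ t₀ := rfl
  -- exclude boundary
  have hEexp : 0 ≤ C₀ * E x₀ * Real.exp t₀ :=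
    mul_nonneg (mul_nonneg hC₀ (hE0 _).le) (Real.exp_pos _).le
  have hx0ne : x₀ ≠ 0 := by
    intro h
    have hz0 : z x₀ t₀ ≤ C₀ := h ▸ hleftbd t₀ ht₀
    have hE1 : E x₀ = 1 := by rw [h]; simp [hEdef]
    have : C₀ ≤ C₀ * Real.exp t₀ := le_mul_of_one_le_right hC₀ (Real.one_le_exp ht₀.1)
    rw [hψp, hE1] at hneg
    linarith
  have hx1ne : x₀ ≠ 1 := by
    intro h
    have : z x₀ t₀ = 0 := h ▸ hrightbd t₀ ht₀
    rw [hψp, this] at hneg; linarith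
  have ht0ne : t₀ ≠ 0 := by
    intro h
    have : z x₀ t₀ = 0 := h ▸ hbottom x₀ hx₀
    rw [hψp, this] at hneg; linarith
  have hx₀i : x₀ ∈ Set.Ioo (0:ℝ) 1 :=
    ⟨lt_of_le_of_ne hx₀.1 (Ne.symm hx0ne), lt_of_le_of_ne hx₀.2 hx1ne⟩
  have ht₀i : t₀ ∈ Set.Ioc (0:ℝ) τ := ⟨lt_of_le_of_ne ht₀.1 (Ne.symm ht0ne), ht₀.2⟩
  -- x-direction second derivative test
  set f : ℝ → ℝ := fun y => C₀ * E y * Real.exp t₀ - z y t₀ with hfdef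
  set f' : ℝ → ℝ := fun y => C₀ * (E y * -q) * Real.exp t₀ - zx y t₀ with hf'def
  have hfd : ∀ y ∈ Set.Icc (0:ℝ) 1, HasDerivAt f (f' y) y := by
    intro y hy
    exact (((hEderiv y).const_mul C₀).mul_const (Real.exp t₀)).sub (hzx y hy t₀ ht₀)
  have hfd2 : HasDerivAt f' (C₀ * (E x₀ * -q * -q) * Real.exp t₀ - zxx x₀ t₀) x₀ := by
    have h1 : HasDerivAt (fun y => C₀ * (E y * -q) * Real.exp t₀)
        (C₀ * (E x₀ * -q * -q) * Real.exp t₀) x₀ := by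
      have := (((hEderiv x₀).mul_const (-q)).const_mul C₀).mul_const (Real.exp t₀)
      convert this using 1
      try ring
    exact h1.sub (hzxx x₀ hx₀ t₀ ht₀)
  have hfmin : ∀ y ∈ Set.Icc (0:ℝ) 1, f x₀ ≤ f y := by
    intro y hy
    exact hmin (y, t₀) ⟨hy, ht₀⟩
  obtain ⟨hfx0, hfxx⟩ := deriv2_test_min 0 1 x₀ f f' _ hx₀i hfd hfd2 hfmin
  -- t-direction derivative nonpositive
  set g' : ℝ := C₀ * E x₀ * Real.exp t₀ - zt x₀ t₀ with hg'def
  have hgt : HasDerivAt (fun s => C₀ * E x₀ * Real.exp s - z x₀ s) g' t₀ :=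
    ((Real.hasDerivAt_exp t₀).const_mul (C₀ * E x₀)).sub (hzt x₀ hx₀ t₀ ht₀)
  have hgmin : IsLocalMinOn (fun s => C₀ * E x₀ * Real.exp s - z x₀ s) (Set.Icc 0 τ) t₀ := by
    apply Filter.eventually_of_mem self_mem_nhdsWithin
    intro s hs
    exact hmin (x₀, s) ⟨hx₀, hs⟩
  have htc : (0 : ℝ) - t₀ ∈ posTangentConeAt (Set.Icc 0 τ) t₀ := by
    apply sub_mem_posTangentConeAt_of_segment_subset
    rw [segment_symm, segment_eq_Icc ht₀.1]
    exact Set.Icc_subset_Icc_right ht₀.2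
  have hgle : g' ≤ 0 := by
    have := hgmin.hasFDerivWithinAt_nonneg hgt.hasFDerivAt.hasFDerivWithinAt htc
    simp at this
    nlinarith [ht₀i.1]
  -- assemble contradiction with PDE
  have hpde := heq x₀ hx₀i t₀ ht₀i
  have haq : 0 ≤ a x₀ t₀ * q := mul_nonneg (ha _ _) hq0
  have hcγ := hc x₀ t₀
  have hbβ := hb x₀ t₀
  simp only [hf'def] at hfx0
  rw [hψp] at hneg
  set P := C₀ * E x₀ * Real.exp t₀ with hPdef
  have hfx0' : C₀ * (E x₀ * -q) * Real.exp t₀ = zx x₀ t₀ := by linarith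
  have hfxx' : zxx x₀ t₀ ≤ C₀ * (E x₀ * -q * -q) * Real.exp t₀ := by linarith
  have key1 : zx x₀ t₀ = -q * P := by rw [← hfx0']; ring
  have key2 : zxx x₀ t₀ ≤ q * q * P := by nlinarith [hfxx']
  have key3 : P ≤ zt x₀ t₀ := by linarith
  have key4 : P < z x₀ t₀ := by linarith
  -- L ψ = γP - a q P - b P - c P > 0 yet ≤ 0 : contradiction
  have hb0 : 0 < b x₀ t₀ := lt_of_lt_of_le hβ hbβ
  have hc0 : 0 < c x₀ t₀ := lt_of_lt_of_le hγ hcγ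
  have e1 : ε * zxx x₀ t₀ ≤ γ * P := by
    have := mul_le_mul_of_nonneg_left key2 hε.le
    nlinarith [hq2]
  have e2 : a x₀ t₀ * zx x₀ t₀ = -(a x₀ t₀ * q * P) := by rw [key1]; ring
  have e3 : b x₀ t₀ * P ≤ b x₀ t₀ * zt x₀ t₀ := mul_le_mul_of_nonneg_left key3 hb0.le
  have e4 : c x₀ t₀ * P < c x₀ t₀ * z x₀ t₀ := mul_lt_mul_of_pos_left key4 hc0
  have e5 : 0 < γ * P - a x₀ t₀ * q * P - b x₀ t₀ * P - c x₀ t₀ * P := by linarith [hpde]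
  have e6 : (c x₀ t₀ - γ) * P ≥ 0 := mul_nonneg (by linarith) hEexp
  have e7 : a x₀ t₀ * q * P ≥ 0 := mul_nonneg haq hEexp
  have e8 : b x₀ t₀ * P ≥ 0 := mul_nonneg hb0.le hEexp
  nlinarith [e5, e6, e7, e8]


theorem singular_component_barrier_bound (ε τ β γ m C₀ : ℝ)
    (hε : 0 < ε) (hε1 : ε ≤ 1) (hτ : 0 < τ) (hβ : 0 < β) (hγ : 0 < γ)
    (hm : m = Real.sqrt γ) (hC₀ : 0 ≤ C₀)
    (a b c z zx zxx zt : ℝ → ℝ → ℝ) (g : ℝ → ℝ → ℝ)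
    (hg : ∀ x t, g x t = Real.exp (-(m * x) / Real.sqrt ε) * Real.exp t)
    (ha : ∀ x t, 0 ≤ a x t) (hb : ∀ x t, β ≤ b x t) (hc : ∀ x t, γ ≤ c x t)
    (hz : ContinuousOn (fun p : ℝ × ℝ => z p.1 p.2)
      (Set.Icc 0 1 ×ˢ Set.Icc 0 τ))
    (hzx : ∀ x ∈ Set.Icc (0:ℝ) 1, ∀ t ∈ Set.Icc (0:ℝ) τ,
      HasDerivAt (fun y => z y t) (zx x t) x)
    (hzxx : ∀ x ∈ Set.Icc (0:ℝ) 1, ∀ t ∈ Set.Icc (0:ℝ) τ,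
      HasDerivAt (fun y => zx y t) (zxx x t) x)
    (hzt : ∀ x ∈ Set.Icc (0:ℝ) 1, ∀ t ∈ Set.Icc (0:ℝ) τ,
      HasDerivAt (fun s => z x s) (zt x t) t)
    (heq : ∀ x ∈ Set.Ioo (0:ℝ) 1, ∀ t ∈ Set.Ioc (0:ℝ) τ,
      ε * zxx x t + a x t * zx x t - b x t * zt x t - c x t * z x t = 0)
    (hbottom : ∀ x ∈ Set.Icc (0:ℝ) 1, z x 0 = 0)
    (hrightbd : ∀ t ∈ Set.Icc (0:ℝ) τ, z 1 t = 0)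
    (hleftbd : ∀ t ∈ Set.Icc (0:ℝ) τ, |z 0 t| ≤ C₀) :
    (∀ C, C₀ ≤ C → ∀ x ∈ Set.Ioo (0:ℝ) 1, ∀ t ∈ Set.Ioc (0:ℝ) τ,
      (ε * (C * (m ^ 2 / ε) * g x t + zxx x t)
        + a x t * (C * (-(m / Real.sqrt ε)) * g x t + zx x t)
        - b x t * (C * g x t + zt x t)
        - c x t * (C * g x t + z x t) ≤ 0) ∧
      (ε * (C * (m ^ 2 / ε) * g x t - zxx x t)
        + a x t * (C * (-(m / Real.sqrt ε)) * g x t - zx x t)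
        - b x t * (C * g x t - zt x t)
        - c x t * (C * g x t - z x t) ≤ 0)) ∧
    (∀ x ∈ Set.Icc (0:ℝ) 1, ∀ t ∈ Set.Icc (0:ℝ) τ,
      |z x t| ≤ C₀ * Real.exp (-(m * x) / Real.sqrt ε) * Real.exp τ) := by
  have hsε : 0 < Real.sqrt ε := Real.sqrt_pos.2 hε
  have hm2 : m ^ 2 = γ := by rw [hm]; exact Real.sq_sqrt hγ.le
  have hm0 : 0 ≤ m := hm ▸ Real.sqrt_nonneg γ
  have hq0 : 0 ≤ m / Real.sqrt ε := div_nonneg hm0 hsε.le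
  constructor
  · intro C hCC x hx t ht
    have hpde := heq x hx t ht
    have hg0 : 0 < g x t := by rw [hg]; positivity
    have hC0 : 0 ≤ C := hC₀.trans hCC
    have hCg : 0 ≤ C * g x t := mul_nonneg hC0 hg0.le
    have hεm : ε * (m ^ 2 / ε) = m ^ 2 := mul_div_cancel₀ _ hε.ne'
    have hcγ := hc x t
    have hbβ := hb x t
    have haq : 0 ≤ a x t * (m / Real.sqrt ε) := mul_nonneg (ha x t) hq0
    have key : C * γ * g x t - a x t * (m / Real.sqrt ε) * (C * g x t)
        - b x t * (C * g x t) - c x t * (C * g x t) ≤ 0 := by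
      nlinarith [mul_nonneg hCg (sub_nonneg.2 hcγ), mul_nonneg haq hCg,
        mul_nonneg (le_trans hβ.le hbβ) hCg]
    constructor
    · nlinarith [key, hpde, hεm, hm2]
    · nlinarith [key, hpde, hεm, hm2]
  · intro x hx t ht
    have hupper := aux_min_principle ε τ β γ m C₀ hε hτ hβ hγ hm hC₀
      a b c z zx zxx zt ha hb hc hz hzx hzxx hzt heq hbottom hrightbd
      (fun t ht => (abs_le.1 (hleftbd t ht)).2) x hx t ht
    have hlower := aux_min_principle ε τ β γ m C₀ hε hτ hβ hγ hm hC₀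
      a b c (fun x t => -z x t) (fun x t => -zx x t) (fun x t => -zxx x t)
      (fun x t => -zt x t) ha hb hc hz.neg
      (fun x hx t ht => (hzx x hx t ht).neg)
      (fun x hx t ht => (hzxx x hx t ht).neg)
      (fun x hx t ht => (hzt x hx t ht).neg)
      (fun x hx t ht => by have := heq x hx t ht; ring_nf; ring_nf at this; linarith)
      (fun x hx => by show -z x 0 = 0; rw [hbottom x hx]; ring)
      (fun t ht => by show -z 1 t = 0; rw [hrightbd t ht]; ring)
      (fun t ht => by show -z 0 t ≤ C₀; linarith [(abs_le.1 (hleftbd t ht)).1])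
      x hx t ht
    have hE0 : 0 ≤ C₀ * Real.exp (-(m * x) / Real.sqrt ε) :=
      mul_nonneg hC₀ (Real.exp_pos _).le
    have het : Real.exp t ≤ Real.exp τ := Real.exp_le_exp.2 ht.2
    have h1 : C₀ * Real.exp (-(m * x) / Real.sqrt ε) * Real.exp t ≤
        C₀ * Real.exp (-(m * x) / Real.sqrt ε) * Real.exp τ :=
      mul_le_mul_of_nonneg_left het hE0
    rw [abs_le]
    constructor
    · linarith
    · linarith
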